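/- Let (Ω, 𝔄, μ) be a measure space, let p, ȳ, y, z : Ω → ℝ be measurable, let ε, κ ∈ (0,1), δ ≥ 0, c_s > 0, M ≥ 0. Assume: (a) |p| ≤ M μ-a.e.; (b) p vanishes μ-a.e. on {ȳ = 0}, i.e., μ({ȳ = 0} ∩ {p ≠ 0}) = 0; (c) |y − ȳ| ≤ ε μ-a.e., |z − ȳ| ≤ κ μ-a.e., and |y − z| ≤ δ μ-a.e.; (d) the structural assumption μ({x : 0 < |ȳ(x)| < η}) ≤ c_s·η holds for every η ∈ (0,1). Define ζ_y := y·(𝟙_{ȳ≥0} − 𝟙_{y≥0}) and ζ_z := z·(𝟙_{ȳ≥0} − 𝟙_{z≥0}). Then p·(ζ_y − ζ_z) is μ-integrable and |∫_Ω p·(ζ_y − ζ_z) dμ| ≤ 2·c_s·M·δ·max(ε,κ). -/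

import Mathlib

open MeasureTheory

private lemma zeta_diff_le_aux (a b c δ : ℝ) (h : |b - c| ≤ δ) :
    |b * ((if 0 ≤ a then (1:ℝ) else 0) - (if 0 ≤ b then (1:ℝ) else 0))
      - c * ((if 0 ≤ a then (1:ℝ) else 0) - (if 0 ≤ c then (1:ℝ) else 0))| ≤ δ := by
  have h' := abs_le.mp h
  have hδ : 0 ≤ δ := (abs_nonneg _).trans h
  split_ifs <;> (try push_neg at *) <;> rw [abs_le] <;>
    constructor <;> nlinarith [h'.1, h'.2]

private lemma zeta_zero_aux (a b ε : ℝ) (hε : 0 < ε) (h : |b - a| ≤ ε) (hbig : ε ≤ |a|) :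
    b * ((if 0 ≤ a then (1:ℝ) else 0) - (if 0 ≤ b then (1:ℝ) else 0)) = 0 := by
  have h' := abs_le.mp h
  rcases lt_trichotomy a 0 with ha | ha | ha
  · rw [abs_of_neg ha] at hbig
    rcases le_or_gt 0 b with hb | hb
    · have : b = 0 := le_antisymm (by linarith) hb
      simp [this]
    · simp [not_le.mpr ha, not_le.mpr hb]
  · rw [ha, abs_zero] at hbig; linarith
  · rw [abs_of_pos ha] at hbig
    have hb : 0 ≤ b := by linarith
    simp [ha.le, hb]

/-- The weak-invariance estimate: with `ζ_y = y·(𝟙_{ȳ≥0} − 𝟙_{y≥0})` and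
`ζ_z = z·(𝟙_{ȳ≥0} − 𝟙_{z≥0})`, the function `p·(ζ_y − ζ_z)` is integrable and
`|∫ p·(ζ_y − ζ_z)| ≤ 2·c_s·M·δ·max(ε,κ)`. -/
theorem zeta_difference_bound
    {Ω : Type*} [MeasurableSpace Ω] (μ : Measure Ω)
    (p ybar y z : Ω → ℝ)
    (hp : Measurable p) (hybar : Measurable ybar)
    (hy : Measurable y) (hz : Measurable z)
    (ε κ δ c_s M : ℝ) (hε0 : 0 < ε) (hε1 : ε < 1) (hκ0 : 0 < κ) (hκ1 : κ < 1)
    (hδ : 0 ≤ δ) (hcs : 0 < c_s) (hM : 0 ≤ M)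
    (hpbd : ∀ᵐ x ∂μ, |p x| ≤ M)
    (hvanish : μ {x | ybar x = 0 ∧ p x ≠ 0} = 0)
    (hyclose : ∀ᵐ x ∂μ, |y x - ybar x| ≤ ε)
    (hzclose : ∀ᵐ x ∂μ, |z x - ybar x| ≤ κ)
    (hyz : ∀ᵐ x ∂μ, |y x - z x| ≤ δ)
    (hstruct : ∀ η : ℝ, 0 < η → η < 1 →
      μ {x | 0 < |ybar x| ∧ |ybar x| < η} ≤ ENNReal.ofReal (c_s * η)) :
    Integrable (fun x =>
        p x * (y x * (Set.indicator {x | 0 ≤ ybar x} (1 : Ω → ℝ) x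
              - Set.indicator {x | 0 ≤ y x} (1 : Ω → ℝ) x)
          - z x * (Set.indicator {x | 0 ≤ ybar x} (1 : Ω → ℝ) x
              - Set.indicator {x | 0 ≤ z x} (1 : Ω → ℝ) x))) μ ∧
    |∫ x, p x * (y x * (Set.indicator {x | 0 ≤ ybar x} (1 : Ω → ℝ) x
              - Set.indicator {x | 0 ≤ y x} (1 : Ω → ℝ) x)
          - z x * (Set.indicator {x | 0 ≤ ybar x} (1 : Ω → ℝ) x
              - Set.indicator {x | 0 ≤ z x} (1 : Ω → ℝ) x)) ∂μ|
      ≤ 2 * c_s * M * δ * max ε κ := by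
  set m : ℝ := max ε κ with hmdef
  have hm0 : 0 < m := lt_max_of_lt_left hε0
  have hm1 : m < 1 := max_lt hε1 hκ1
  set f : Ω → ℝ := fun x =>
        p x * (y x * (Set.indicator {x | 0 ≤ ybar x} (1 : Ω → ℝ) x
              - Set.indicator {x | 0 ≤ y x} (1 : Ω → ℝ) x)
          - z x * (Set.indicator {x | 0 ≤ ybar x} (1 : Ω → ℝ) x
              - Set.indicator {x | 0 ≤ z x} (1 : Ω → ℝ) x)) with hfdef
  set S : Set Ω := {x | 0 < |ybar x| ∧ |ybar x| < m} with hSdef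
  have hSmeas : MeasurableSet S :=
    (measurableSet_lt measurable_const hybar.abs).inter
      (measurableSet_lt hybar.abs measurable_const)
  have hμS : μ S ≤ ENNReal.ofReal (c_s * m) := hstruct m hm0 hm1
  have hμSfin : μ S < ⊤ := lt_of_le_of_lt hμS ENNReal.ofReal_lt_top
  -- measurability of f
  have hset1 : MeasurableSet {x | 0 ≤ ybar x} := measurableSet_le measurable_const hybar
  have hset2 : MeasurableSet {x | 0 ≤ y x} := measurableSet_le measurable_const hy
  have hset3 : MeasurableSet {x | 0 ≤ z x} := measurableSet_le measurable_const hz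
  have hfm : Measurable f := by
    apply hp.mul
    exact ((hy.mul ((measurable_const.indicator hset1).sub
        (measurable_const.indicator hset2))).sub
      (hz.mul ((measurable_const.indicator hset1).sub
        (measurable_const.indicator hset3))))
  -- a.e. vanishing hypothesis in pointwise form
  have hv : ∀ᵐ x ∂μ, ybar x = 0 → p x = 0 := by
    rw [ae_iff]
    convert hvanish using 2
    ext x
    simp only [Set.mem_setOf_eq]
    tauto
  -- indicator rewriting
  have hind : ∀ (g : Ω → ℝ) (x : Ω),
      Set.indicator {x | 0 ≤ g x} (1 : Ω → ℝ) x = if 0 ≤ g x then (1:ℝ) else 0 := by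
    intro g x
    simp [Set.indicator_apply, Set.mem_setOf_eq]
  -- the a.e. pointwise bound
  have hae : ∀ᵐ x ∂μ, |f x| ≤ S.indicator (fun _ => M * δ) x := by
    filter_upwards [hpbd, hv, hyclose, hzclose, hyz] with x hpx hvx hyx hzx hyzx
    by_cases hxS : x ∈ S
    · rw [Set.indicator_of_mem hxS]
      rw [hfdef]
      simp only [hind]
      rw [abs_mul]
      exact mul_le_mul hpx (zeta_diff_le_aux (ybar x) (y x) (z x) δ hyzx)
        (abs_nonneg _) hM
    · rw [Set.indicator_of_notMem hxS]
      have hzero : f x = 0 := by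
        rw [hSdef] at hxS
        simp only [Set.mem_setOf_eq, not_and, not_lt] at hxS
        rcases eq_or_ne (ybar x) 0 with hy0 | hy0
        · rw [hfdef]; simp [hvx hy0]
        · have hbig : m ≤ |ybar x| := hxS (abs_pos.mpr hy0)
          rw [hfdef]
          simp only [hind]
          rw [zeta_zero_aux (ybar x) (y x) ε hε0 hyx (le_trans (le_max_left ε κ) hbig),
            zeta_zero_aux (ybar x) (z x) κ hκ0 hzx (le_trans (le_max_right ε κ) hbig)]
          ring
      rw [hzero, abs_zero]
  -- integrability
  have hIndInt : Integrable (S.indicator (fun _ => M * δ)) μ :=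
    (integrable_indicator_iff hSmeas).mpr (integrableOn_const hμSfin.ne)
  have hInt : Integrable f μ :=
    Integrable.mono' hIndInt hfm.aestronglyMeasurable
      (hae.mono fun x hx => (Real.norm_eq_abs (f x)).le.trans hx)
  refine ⟨hInt, ?_⟩
  have h1 : |∫ x, f x ∂μ| ≤ ∫ x, |f x| ∂μ := by simpa [Real.norm_eq_abs] using norm_integral_le_integral_norm (μ := μ) f
  have h2 : ∫ x, |f x| ∂μ ≤ ∫ x, S.indicator (fun _ => M * δ) x ∂μ :=
    integral_mono_ae hInt.abs hIndInt hae
  have h3 : ∫ x, S.indicator (fun _ => M * δ) x ∂μ = (μ S).toReal * (M * δ) := by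
    rw [integral_indicator_const _ hSmeas, smul_eq_mul, measureReal_def]
  have h4 : (μ S).toReal ≤ c_s * m :=
    ENNReal.toReal_le_of_le_ofReal (by positivity) hμS
  have h5 : (μ S).toReal * (M * δ) ≤ (c_s * m) * (M * δ) :=
    mul_le_mul_of_nonneg_right h4 (by positivity)
  calc |∫ x, f x ∂μ| ≤ (c_s * m) * (M * δ) := by linarith [h1, h2.trans_eq h3]
    _ ≤ 2 * c_s * M * δ * m := by
      nlinarith [mul_nonneg (mul_nonneg (mul_nonneg hcs.le hM) hδ) hm0.le]
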